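/- The cubical diagonal Δ_W is a chain map: ∂_{W⊗W} ∘ Δ_W = Δ_W ∘ ∂_W on C_*(W_n), where the tensor product differential uses the Koszul sign rule. -/

import Mathlib

/-- Metric trees: planar rooted trees in which each internal edge is labeled
either *metric* or *non-metric*.  The label of the edge lying above a vertex
is stored at that vertex (`true` = metric); the flag stored at the root
vertex is irrelevant (the root edge is not an internal edge) and is ignored
by all operations below. -/
inductive MTree : Type
  | leaf : MTree
  | node : Bool → List MTree → MTree

namespace MTree

/- The number of metric edges of a subtree, *including* its root edge. -/
mutual
  def subMetric : MTree → ℕ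
    | .leaf => 0
    | .node b cs => (if b then 1 else 0) + subMetricList cs
  def subMetricList : List MTree → ℕ
    | [] => 0
    | t :: ts => subMetric t + subMetricList ts
end

/-- The number of metric edges of a metric tree.  The metric edges are
ordered by the preorder (depth-first, left-to-right) traversal, which is the
canonical ordering used to represent orientations. -/
def numMetric : MTree → ℕ
  | .leaf => 0
  | .node _ cs => subMetricList cs

/- `contract T i` collapses the `i`-th metric edge of `T` (0-indexed in the
canonical preorder ordering of the metric edges): the vertex below the
collapsed edge is merged into the vertex above it. -/
mutual
  def csub : ℕ → MTree → List MTree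
    | _, .leaf => [.leaf]
    | i, .node true cs => if i = 0 then cs else [.node true (clist (i - 1) cs)]
    | i, .node false cs => [.node false (clist i cs)]
  def clist : ℕ → List MTree → List MTree
    | _, [] => []
    | i, t :: ts =>
        if i < subMetric t then csub i t ++ ts else t :: clist (i - subMetric t) ts
end

def contract : MTree → ℕ → MTree
  | .leaf, _ => .leaf
  | .node b cs, i => .node b (clist i cs)

/- `demote T i` changes the `i`-th metric edge of `T` (0-indexed, canonical
preorder ordering) into a non-metric edge. -/
mutual
  def dsub : ℕ → MTree → MTree
    | _, .leaf => .leaf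
    | i, .node true cs => if i = 0 then .node false cs else .node true (dlist (i - 1) cs)
    | i, .node false cs => .node false (dlist i cs)
  def dlist : ℕ → List MTree → List MTree
    | _, [] => []
    | i, t :: ts =>
        if i < subMetric t then dsub i t :: ts else t :: dlist (i - subMetric t) ts
end

def demote : MTree → ℕ → MTree
  | .leaf, _ => .leaf
  | .node b cs, i => .node b (dlist i cs)

end MTree

/-- The chains on the cubical complex `W_n`: the free `ℤ`-module spanned by
the metric trees, each taken with its canonical orientation (the preorder
ordering of its metric edges).  An oriented cell `(T, ω)` with `ω` an
arbitrary ordering of the metric edges is identified with `±1` times the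
canonical basis element, the sign being the parity of `ω` relative to the
canonical ordering; this realizes the relation `(T, ω) = -(T, ω')` for
opposite orientations. -/
abbrev WChains : Type := MTree →₀ ℤ

open MTree in
/-- The boundary of an oriented cell, `∂_W(T, e_1 ∧ ... ∧ e_k) =
∑_{i=1}^{k} (-1)^i [(T/e_i, e_1 ∧ ... ê_i ... ∧ e_k) -
(T_i, e_1 ∧ ... ê_i ... ∧ e_k)]`, written in the canonical basis (the edges
`e_1, ..., e_k` in canonical preorder; omitting `e_i` leaves the remaining
edges again in canonical preorder). -/
noncomputable def bndWCell (T : MTree) : WChains :=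
  ∑ i ∈ Finset.range (numMetric T),
    ((-1 : ℤ)) ^ (i + 1) •
      (Finsupp.single (contract T i) 1 - Finsupp.single (demote T i) 1)

/-- The boundary operator `∂_W`, extended linearly. -/
noncomputable def bndW : WChains →ₗ[ℤ] WChains :=
  Finsupp.lsum ℤ fun T => LinearMap.toSpanSingleton ℤ WChains (bndWCell T)

namespace MTree

/- `contractSet` collapses all the metric edges whose canonical preorder
index (shifted by the offset `off`) lies in the given finite set `L`. -/
mutual
  def cSetSub (L : Finset ℕ) : ℕ → MTree → List MTree
    | _, .leaf => [.leaf]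
    | off, .node true cs =>
        if off ∈ L then cSetList L (off + 1) cs
        else [.node true (cSetList L (off + 1) cs)]
    | off, .node false cs => [.node false (cSetList L off cs)]
  def cSetList (L : Finset ℕ) : ℕ → List MTree → List MTree
    | _, [] => []
    | off, t :: ts => cSetSub L off t ++ cSetList L (off + subMetric t) ts
end

/-- `contractSet T L` is `T/e_L`: the tree `T` with all the metric edges
indexed by `L` collapsed. -/
def contractSet : MTree → Finset ℕ → MTree
  | .leaf, _ => .leaf
  | .node b cs, L => .node b (cSetList L 0 cs)

/- `demoteSet` makes non-metric all the metric edges whose canonical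
preorder index (shifted by the offset) lies in the given set `R`. -/
mutual
  def dSetSub (R : Finset ℕ) : ℕ → MTree → MTree
    | _, .leaf => .leaf
    | off, .node true cs => .node (¬ off ∈ R) (dSetList R (off + 1) cs)
    | off, .node false cs => .node false (dSetList R off cs)
  def dSetList (R : Finset ℕ) : ℕ → List MTree → List MTree
    | _, [] => []
    | off, t :: ts => dSetSub R off t :: dSetList R (off + subMetric t) ts
end

/-- `demoteSet T R` is `T_R`: the tree `T` with all the metric edges indexed
by `R` changed into non-metric edges. -/
def demoteSet : MTree → Finset ℕ → MTree
  | .leaf, _ => .leaf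
  | .node b cs, R => .node b (dSetList R 0 cs)

end MTree

/-- `ρ(L, R)`: the number of couples `i ∈ L`, `j ∈ R` with `i < j`, where
`R` is the complement of `L` in `{0, ..., k-1}`. -/
def rho (k : ℕ) (L : Finset ℕ) : ℕ :=
  ∑ j ∈ Finset.range k \ L, (L.filter (fun i => i < j)).card

open MTree in
/-- The cubical (Serre) diagonal on a basis cell:
`Δ_W(T, e_1 ∧ ... ∧ e_k) = ∑_{L ⊔ R = {1,...,k}} (-1)^{ρ(L,R)}
(T/e_L, ∧_{j ∈ R} e_j) ⊗ (T_R, ∧_{i ∈ L} e_i)`, written in the canonical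
basis: the metric edges surviving in each factor again appear in their
canonical preorder ordering. -/
noncomputable def diagWCell (T : MTree) : TensorProduct ℤ WChains WChains :=
  ∑ L ∈ (Finset.range (numMetric T)).powerset,
    ((-1 : ℤ)) ^ (rho (numMetric T) L) •
      (Finsupp.single (contractSet T L) (1 : ℤ) ⊗ₜ[ℤ]
       Finsupp.single (demoteSet T (Finset.range (numMetric T) \ L)) (1 : ℤ))

/-- The cubical diagonal `Δ_W`, extended linearly. -/
noncomputable def diagW : WChains →ₗ[ℤ] TensorProduct ℤ WChains WChains :=
  Finsupp.lsum ℤ fun T =>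
    LinearMap.toSpanSingleton ℤ (TensorProduct ℤ WChains WChains) (diagWCell T)

/-- The Koszul sign operator: a basis cell of degree `k` (a metric tree with
`k` metric edges) is multiplied by `(-1)^k`. -/
noncomputable def koszulW : WChains →ₗ[ℤ] WChains :=
  Finsupp.lsum ℤ fun T =>
    LinearMap.toSpanSingleton ℤ WChains
      (((-1 : ℤ) ^ MTree.numMetric T) • Finsupp.single T 1)

/-- The differential on `C_*(W_n) ⊗ C_*(W_n)` with the Koszul sign rule:
`∂(x ⊗ y) = ∂x ⊗ y + (-1)^{deg x} x ⊗ ∂y`. -/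
noncomputable def bndWTensor :
    TensorProduct ℤ WChains WChains →ₗ[ℤ] TensorProduct ℤ WChains WChains :=
  TensorProduct.map bndW LinearMap.id + TensorProduct.map koszulW bndW

section Aux
open Finset

/-- rank: number of indices `< j` not in `E`. -/
def rkk (E : Finset ℕ) (j : ℕ) : ℕ := (Finset.range j \ E).card

lemma rkk_zero (E : Finset ℕ) : rkk E 0 = 0 := by simp [rkk]

lemma rkk_succ_mem {E : Finset ℕ} {j : ℕ} (h : j ∈ E) : rkk E (j+1) = rkk E j := by
  unfold rkk
  rw [Finset.range_add_one, Finset.insert_sdiff_of_mem _ h]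

lemma rkk_succ_not_mem {E : Finset ℕ} {j : ℕ} (h : j ∉ E) : rkk E (j+1) = rkk E j + 1 := by
  unfold rkk
  rw [Finset.range_add_one, Finset.insert_sdiff_of_notMem _ h,
    Finset.card_insert_of_notMem (by simp)]

lemma rkk_lt {E : Finset ℕ} {a b : ℕ} (ha : a ∉ E) (hab : a < b) : rkk E a < rkk E b := by
  apply Finset.card_lt_card
  constructor
  · exact Finset.sdiff_subset_sdiff (Finset.range_subset_range.2 hab.le) le_rfl
  · intro hsub
    have : a ∈ Finset.range a \ E := hsub (by simp [hab, ha])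
    simp at this

lemma rkk_injOn {E : Finset ℕ} {a b : ℕ} (ha : a ∉ E) (hb : b ∉ E)
    (h : rkk E a = rkk E b) : a = b := by
  rcases lt_trichotomy a b with h'|h'|h'
  · exact absurd h (rkk_lt ha h').ne
  · exact h'
  · exact absurd h.symm (rkk_lt hb h').ne

lemma rkk_lt_iff {E : Finset ℕ} {a b : ℕ} (ha : a ∉ E) (hb : b ∉ E) :
    rkk E a < rkk E b ↔ a < b := by
  constructor
  · intro h
    rcases lt_trichotomy a b with h'|h'|h'
    · exact h'
    · exact absurd h (by simp [h'])
    · exact absurd h (by have := rkk_lt hb h'; omega)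
  · exact rkk_lt ha

lemma mem_image_rkk {E L : Finset ℕ} {off : ℕ} (hL : ∀ x ∈ L, x ∉ E) (hoff : off ∉ E) :
    rkk E off ∈ L.image (rkk E) ↔ off ∈ L := by
  simp only [Finset.mem_image]
  constructor
  · rintro ⟨x, hx, he⟩
    rwa [rkk_injOn (hL x hx) hoff he] at hx
  · intro h; exact ⟨off, h, rfl⟩

lemma image_rkk_range (E : Finset ℕ) (k : ℕ) :
    (Finset.range k \ E).image (rkk E) = Finset.range (rkk E k) := by
  induction k with
  | zero => simp [rkk]
  | succ k ih =>
    by_cases h : k ∈ E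
    · rw [Finset.range_add_one, Finset.insert_sdiff_of_mem _ h, rkk_succ_mem h, ih]
    · rw [Finset.range_add_one, Finset.insert_sdiff_of_notMem _ h, Finset.image_insert,
        ih, rkk_succ_not_mem h, Finset.range_add_one]

end Aux

namespace MTree
open Finset

/- simultaneous resolution: contract edges in `C`, demote edges in `D`. -/
mutual
  def rSub (C D : Finset ℕ) : ℕ → MTree → List MTree
    | _, .leaf => [.leaf]
    | off, .node true cs =>
        if off ∈ C then rList C D (off + 1) cs
        else [.node (¬ off ∈ D) (rList C D (off + 1) cs)]
    | off, .node false cs => [.node false (rList C D off cs)]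
  def rList (C D : Finset ℕ) : ℕ → List MTree → List MTree
    | _, [] => []
    | off, t :: ts => rSub C D off t ++ rList C D (off + subMetric t) ts
end

def res (C D : Finset ℕ) : MTree → MTree
  | .leaf => .leaf
  | .node b cs => .node b (rList C D 0 cs)

lemma subMetricList_append (as bs : List MTree) :
    subMetricList (as ++ bs) = subMetricList as + subMetricList bs := by
  induction as with
  | nil => simp [subMetricList]
  | cons a as ih => simp [subMetricList, ih]; ring

lemma cSetList_append (L : Finset ℕ) (p : ℕ) (as bs : List MTree) :
    cSetList L p (as ++ bs) = cSetList L p as ++ cSetList L (p + subMetricList as) bs := by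
  induction as generalizing p with
  | nil => simp [cSetList, subMetricList]
  | cons a as ih =>
    have e : p + subMetricList (a :: as) = (p + subMetric a) + subMetricList as := by
      simp [subMetricList]; omega
    simp only [List.cons_append, cSetList, List.append_eq, ih, e, List.append_assoc]

lemma dSetList_append (L : Finset ℕ) (p : ℕ) (as bs : List MTree) :
    dSetList L p (as ++ bs) = dSetList L p as ++ dSetList L (p + subMetricList as) bs := by
  induction as generalizing p with
  | nil => simp [dSetList, subMetricList]
  | cons a as ih =>
    have e : p + subMetricList (a :: as) = (p + subMetric a) + subMetricList as := by
      simp [subMetricList]; omega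
    simp only [List.cons_append, dSetList, List.append_eq, ih, e]

mutual
  lemma sm_rSub (C D : Finset ℕ) (off : ℕ) (t : MTree) :
      subMetricList (rSub C D off t) + rkk (C ∪ D) off = rkk (C ∪ D) (off + subMetric t) := by
    match t with
    | .leaf => simp [rSub, subMetricList, subMetric]
    | .node true cs =>
      have ih := sm_rList C D (off + 1) cs
      have e : off + subMetric (.node true cs) = (off + 1) + subMetricList cs := by
        simp [subMetric]; omega
      rw [e]
      by_cases hC : off ∈ C
      · have h1 : rkk (C ∪ D) (off + 1) = rkk (C ∪ D) off := rkk_succ_mem (by simp [hC])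
        simp only [rSub, if_pos hC]
        omega
      · by_cases hD : off ∈ D
        · have h1 : rkk (C ∪ D) (off + 1) = rkk (C ∪ D) off := rkk_succ_mem (by simp [hD])
          simp only [rSub, if_neg hC, subMetricList, subMetric, hD]
          simp only [not_true_eq_false, decide_false, Bool.false_eq_true, if_false]
          omega
        · have h1 : rkk (C ∪ D) (off + 1) = rkk (C ∪ D) off + 1 :=
            rkk_succ_not_mem (by simp [hC, hD])
          simp only [rSub, if_neg hC, subMetricList, subMetric, hD]
          simp only [not_false_eq_true, decide_true, if_true]
          omega
    | .node false cs =>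
      have ih := sm_rList C D off cs
      have e : off + subMetric (.node false cs) = off + subMetricList cs := by
        simp [subMetric]
      rw [e]
      simp only [rSub, subMetricList, subMetric, Bool.false_eq_true, if_false]
      omega
  lemma sm_rList (C D : Finset ℕ) (off : ℕ) (ts : List MTree) :
      subMetricList (rList C D off ts) + rkk (C ∪ D) off
        = rkk (C ∪ D) (off + subMetricList ts) := by
    match ts with
    | [] => simp [rList, subMetricList]
    | t :: ts =>
      have ih1 := sm_rSub C D off t
      have ih2 := sm_rList C D (off + subMetric t) ts
      have e : off + subMetricList (t :: ts) = (off + subMetric t) + subMetricList ts := by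
        simp [subMetricList]; omega
      rw [e]
      simp only [rList, subMetricList_append, subMetricList]
      omega
end
end MTree

namespace MTree
open Finset

/- `cSet`/`dSet` with sets out of range act as the identity. -/
mutual
  lemma cSetSub_id (L : Finset ℕ) (off : ℕ) (t : MTree)
      (h : ∀ j ∈ L, j < off ∨ off + subMetric t ≤ j) : cSetSub L off t = [t] := by
    match t with
    | .leaf => simp [cSetSub]
    | .node true cs =>
      have hsm : subMetric (MTree.node true cs) = 1 + subMetricList cs := by simp [subMetric]
      have hoff : off ∉ L := fun hc => by have := h off hc; omega
      have ih := cSetList_id L (off + 1) cs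
        (fun j hj => by have := h j hj; rw [hsm] at this; omega)
      simp [cSetSub, hoff, ih]
    | .node false cs =>
      have hsm : subMetric (MTree.node false cs) = subMetricList cs := by simp [subMetric]
      have ih := cSetList_id L off cs
        (fun j hj => by have := h j hj; rw [hsm] at this; omega)
      simp [cSetSub, ih]
  lemma cSetList_id (L : Finset ℕ) (off : ℕ) (ts : List MTree)
      (h : ∀ j ∈ L, j < off ∨ off + subMetricList ts ≤ j) : cSetList L off ts = ts := by
    match ts with
    | [] => simp [cSetList]
    | t :: ts =>
      have hsm : subMetricList (t :: ts) = subMetric t + subMetricList ts := rfl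
      have ih1 := cSetSub_id L off t (fun j hj => by have := h j hj; rw [hsm] at this; omega)
      have ih2 := cSetList_id L (off + subMetric t) ts
        (fun j hj => by have := h j hj; rw [hsm] at this; omega)
      simp [cSetList, ih1, ih2]
end

mutual
  lemma dSetSub_id (L : Finset ℕ) (off : ℕ) (t : MTree)
      (h : ∀ j ∈ L, j < off ∨ off + subMetric t ≤ j) : dSetSub L off t = t := by
    match t with
    | .leaf => simp [dSetSub]
    | .node true cs =>
      have hsm : subMetric (MTree.node true cs) = 1 + subMetricList cs := by simp [subMetric]
      have hoff : off ∉ L := fun hc => by have := h off hc; omega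
      have ih := dSetList_id L (off + 1) cs
        (fun j hj => by have := h j hj; rw [hsm] at this; omega)
      simp [dSetSub, hoff, ih]
    | .node false cs =>
      have hsm : subMetric (MTree.node false cs) = subMetricList cs := by simp [subMetric]
      have ih := dSetList_id L off cs
        (fun j hj => by have := h j hj; rw [hsm] at this; omega)
      simp [dSetSub, ih]
  lemma dSetList_id (L : Finset ℕ) (off : ℕ) (ts : List MTree)
      (h : ∀ j ∈ L, j < off ∨ off + subMetricList ts ≤ j) : dSetList L off ts = ts := by
    match ts with
    | [] => simp [dSetList]
    | t :: ts =>
      have hsm : subMetricList (t :: ts) = subMetric t + subMetricList ts := rfl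
      have ih1 := dSetSub_id L off t (fun j hj => by have := h j hj; rw [hsm] at this; omega)
      have ih2 := dSetList_id L (off + subMetric t) ts
        (fun j hj => by have := h j hj; rw [hsm] at this; omega)
      simp [dSetList, ih1, ih2]
end

/- `cSet`/`dSet` are the empty-set specializations of `rSub/rList`. -/
mutual
  lemma cSetSub_eq_rSub (L : Finset ℕ) (off : ℕ) (t : MTree) :
      cSetSub L off t = rSub L ∅ off t := by
    match t with
    | .leaf => simp [cSetSub, rSub]
    | .node true cs =>
      have ih := cSetList_eq_rList L (off + 1) cs
      by_cases h : off ∈ L <;> simp [cSetSub, rSub, h, ih]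
    | .node false cs =>
      have ih := cSetList_eq_rList L off cs
      simp [cSetSub, rSub, ih]
  lemma cSetList_eq_rList (L : Finset ℕ) (off : ℕ) (ts : List MTree) :
      cSetList L off ts = rList L ∅ off ts := by
    match ts with
    | [] => simp [cSetList, rList]
    | t :: ts =>
      have ih1 := cSetSub_eq_rSub L off t
      have ih2 := cSetList_eq_rList L (off + subMetric t) ts
      simp [cSetList, rList, ih1, ih2]
end

mutual
  lemma dSetSub_eq_rSub (R : Finset ℕ) (off : ℕ) (t : MTree) :
      [dSetSub R off t] = rSub ∅ R off t := by
    match t with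
    | .leaf => simp [dSetSub, rSub]
    | .node true cs =>
      have ih := dSetList_eq_rList R (off + 1) cs
      simp [dSetSub, rSub, ih]
    | .node false cs =>
      have ih := dSetList_eq_rList R off cs
      simp [dSetSub, rSub, ih]
  lemma dSetList_eq_rList (R : Finset ℕ) (off : ℕ) (ts : List MTree) :
      dSetList R off ts = rList ∅ R off ts := by
    match ts with
    | [] => simp [dSetList, rList]
    | t :: ts =>
      have ih1 := dSetSub_eq_rSub R off t
      have ih2 := dSetList_eq_rList R (off + subMetric t) ts
      simp [dSetList, rList, ← ih1, ih2]
end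

end MTree

namespace MTree
open Finset

mutual
  lemma csub_eq_cSetSub (i off : ℕ) (t : MTree) (h : i < subMetric t) :
      csub i t = cSetSub {i + off} off t := by
    match t with
    | .leaf => simp [subMetric] at h
    | .node true cs =>
      have hsm : subMetric (MTree.node true cs) = 1 + subMetricList cs := by simp [subMetric]
      by_cases h0 : i = 0
      · subst h0
        have hid := cSetList_id {off} (off + 1) cs (fun j hj => by simp at hj; omega)
        simp [csub, cSetSub, hid]
      · have ih := clist_eq_cSetList (i - 1) (off + 1) cs
        have e : i - 1 + (off + 1) = i + off := by omega
        rw [e] at ih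
        have hmem : off ∉ ({i + off} : Finset ℕ) := by simp; omega
        simp [csub, cSetSub, h0, hmem, ih]
    | .node false cs =>
      have ih := clist_eq_cSetList i off cs
      simp [csub, cSetSub, ih]
  lemma clist_eq_cSetList (i off : ℕ) (ts : List MTree) :
      clist i ts = cSetList {i + off} off ts := by
    match ts with
    | [] => simp [clist, cSetList]
    | t :: ts =>
      by_cases h : i < subMetric t
      · have ih := csub_eq_cSetSub i off t h
        have hid := cSetList_id {i + off} (off + subMetric t) ts (fun j hj => by simp at hj; omega)
        simp [clist, cSetList, h, ih, hid]
      · have ih := clist_eq_cSetList (i - subMetric t) (off + subMetric t) ts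
        have e : i - subMetric t + (off + subMetric t) = i + off := by omega
        rw [e] at ih
        have hid := cSetSub_id {i + off} off t (fun j hj => by simp at hj; omega)
        simp [clist, cSetList, h, ih, hid]
end

mutual
  lemma dsub_eq_dSetSub (i off : ℕ) (t : MTree) (h : i < subMetric t) :
      dsub i t = dSetSub {i + off} off t := by
    match t with
    | .leaf => simp [subMetric] at h
    | .node true cs =>
      have hsm : subMetric (MTree.node true cs) = 1 + subMetricList cs := by simp [subMetric]
      by_cases h0 : i = 0
      · subst h0
        have hid := dSetList_id {off} (off + 1) cs (fun j hj => by simp at hj; omega)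
        simp [dsub, dSetSub, hid]
      · have ih := dlist_eq_dSetList (i - 1) (off + 1) cs
        have e : i - 1 + (off + 1) = i + off := by omega
        rw [e] at ih
        have hmem : off ∉ ({i + off} : Finset ℕ) := by simp; omega
        simp [dsub, dSetSub, h0, hmem, ih]
    | .node false cs =>
      have ih := dlist_eq_dSetList i off cs
      simp [dsub, dSetSub, ih]
  lemma dlist_eq_dSetList (i off : ℕ) (ts : List MTree) :
      dlist i ts = dSetList {i + off} off ts := by
    match ts with
    | [] => simp [dlist, dSetList]
    | t :: ts =>
      by_cases h : i < subMetric t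
      · have ih := dsub_eq_dSetSub i off t h
        have hid := dSetList_id {i + off} (off + subMetric t) ts (fun j hj => by simp at hj; omega)
        simp [dlist, dSetList, h, ih, hid]
      · have ih := dlist_eq_dSetList (i - subMetric t) (off + subMetric t) ts
        have e : i - subMetric t + (off + subMetric t) = i + off := by omega
        rw [e] at ih
        have hid := dSetSub_id {i + off} off t (fun j hj => by simp at hj; omega)
        simp [dlist, dSetList, h, ih, hid]
end

end MTree

namespace MTree
open Finset

mutual
  lemma cset_rSub (C D L'' : Finset ℕ) (hL : ∀ x ∈ L'', x ∉ C ∪ D) (off : ℕ) (t : MTree) :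
      cSetList (L''.image (rkk (C ∪ D))) (rkk (C ∪ D) off) (rSub C D off t)
        = rSub (C ∪ L'') D off t := by
    match t with
    | .leaf => simp [rSub, cSetList, cSetSub]
    | .node true cs =>
      have ih := cset_rList C D L'' hL (off + 1) cs
      by_cases hC : off ∈ C
      · have h1 : rkk (C ∪ D) (off + 1) = rkk (C ∪ D) off := rkk_succ_mem (by simp [hC])
        rw [← h1]
        simp only [rSub, if_pos hC, if_pos (Finset.mem_union_left L'' hC)]
        exact ih
      · by_cases hD : off ∈ D
        · have hoffL : off ∉ L'' := fun hc => (hL off hc) (Finset.mem_union_right C hD)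
          have h1 : rkk (C ∪ D) (off + 1) = rkk (C ∪ D) off := rkk_succ_mem (by simp [hD])
          rw [h1] at ih
          have hCL : off ∉ C ∪ L'' := by simp [hC, hoffL]
          simp [rSub, hC, hCL, hD, cSetList, cSetSub, ih]
        · have hoffE : off ∉ C ∪ D := by simp [hC, hD]
          have h1 : rkk (C ∪ D) (off + 1) = rkk (C ∪ D) off + 1 := rkk_succ_not_mem hoffE
          rw [h1] at ih
          by_cases hLm : off ∈ L''
          · have hmem : rkk (C ∪ D) off ∈ L''.image (rkk (C ∪ D)) :=
              Finset.mem_image.2 ⟨off, hLm, rfl⟩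
            have hCL : off ∈ C ∪ L'' := Finset.mem_union_right C hLm
            simp [rSub, hC, hD, hCL, cSetList, cSetSub, hmem, ih]
          · have hmem : rkk (C ∪ D) off ∉ L''.image (rkk (C ∪ D)) := by
              rw [mem_image_rkk hL hoffE]; exact hLm
            have hCL : off ∉ C ∪ L'' := by simp [hC, hLm]
            simp [rSub, hC, hD, hCL, cSetList, cSetSub, hmem, ih]
    | .node false cs =>
      have ih := cset_rList C D L'' hL off cs
      simp [rSub, cSetList, cSetSub, ih]
  lemma cset_rList (C D L'' : Finset ℕ) (hL : ∀ x ∈ L'', x ∉ C ∪ D) (off : ℕ)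
      (ts : List MTree) :
      cSetList (L''.image (rkk (C ∪ D))) (rkk (C ∪ D) off) (rList C D off ts)
        = rList (C ∪ L'') D off ts := by
    match ts with
    | [] => simp [rList, cSetList]
    | t :: ts =>
      have ih1 := cset_rSub C D L'' hL off t
      have ih2 := cset_rList C D L'' hL (off + subMetric t) ts
      have hsm := sm_rSub C D off t
      have e : rkk (C ∪ D) off + subMetricList (rSub C D off t)
          = rkk (C ∪ D) (off + subMetric t) := by omega
      simp only [rList, cSetList_append, e, ih1, ih2]
end

mutual
  lemma dset_rSub (C D R'' : Finset ℕ) (hR : ∀ x ∈ R'', x ∉ C ∪ D) (off : ℕ) (t : MTree) :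
      dSetList (R''.image (rkk (C ∪ D))) (rkk (C ∪ D) off) (rSub C D off t)
        = rSub C (D ∪ R'') off t := by
    match t with
    | .leaf => simp [rSub, dSetList, dSetSub]
    | .node true cs =>
      have ih := dset_rList C D R'' hR (off + 1) cs
      by_cases hC : off ∈ C
      · have h1 : rkk (C ∪ D) (off + 1) = rkk (C ∪ D) off := rkk_succ_mem (by simp [hC])
        rw [← h1]
        simp only [rSub, if_pos hC]
        exact ih
      · by_cases hD : off ∈ D
        · have hoffR : off ∉ R'' := fun hc => (hR off hc) (Finset.mem_union_right C hD)
          have h1 : rkk (C ∪ D) (off + 1) = rkk (C ∪ D) off := rkk_succ_mem (by simp [hD])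
          rw [h1] at ih
          have hDR : off ∈ D ∪ R'' := Finset.mem_union_left R'' hD
          simp [rSub, hC, hD, hDR, dSetList, dSetSub, ih]
        · have hoffE : off ∉ C ∪ D := by simp [hC, hD]
          have h1 : rkk (C ∪ D) (off + 1) = rkk (C ∪ D) off + 1 := rkk_succ_not_mem hoffE
          rw [h1] at ih
          by_cases hRm : off ∈ R''
          · have hmem : rkk (C ∪ D) off ∈ R''.image (rkk (C ∪ D)) :=
              Finset.mem_image.2 ⟨off, hRm, rfl⟩
            have hDR : off ∈ D ∪ R'' := Finset.mem_union_right D hRm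
            simp [rSub, hC, hD, hDR, dSetList, dSetSub, hmem, ih]
          · have hmem : rkk (C ∪ D) off ∉ R''.image (rkk (C ∪ D)) := by
              rw [mem_image_rkk hR hoffE]; exact hRm
            have hDR : off ∉ D ∪ R'' := by simp [hD, hRm]
            simp [rSub, hC, hD, hDR, dSetList, dSetSub, hmem, ih]
    | .node false cs =>
      have ih := dset_rList C D R'' hR off cs
      simp [rSub, dSetList, dSetSub, ih]
  lemma dset_rList (C D R'' : Finset ℕ) (hR : ∀ x ∈ R'', x ∉ C ∪ D) (off : ℕ)
      (ts : List MTree) :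
      dSetList (R''.image (rkk (C ∪ D))) (rkk (C ∪ D) off) (rList C D off ts)
        = rList C (D ∪ R'') off ts := by
    match ts with
    | [] => simp [rList, dSetList]
    | t :: ts =>
      have ih1 := dset_rSub C D R'' hR off t
      have ih2 := dset_rList C D R'' hR (off + subMetric t) ts
      have hsm := sm_rSub C D off t
      have e : rkk (C ∪ D) off + subMetricList (rSub C D off t)
          = rkk (C ∪ D) (off + subMetric t) := by omega
      simp only [rList, dSetList_append, e, ih1, ih2]
end

end MTree

namespace MTree
open Finset

lemma contractSet_eq_res (T : MTree) (L : Finset ℕ) : contractSet T L = res L ∅ T := by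
  cases T with
  | leaf => rfl
  | node b cs => simp [contractSet, res, cSetList_eq_rList]

lemma demoteSet_eq_res (T : MTree) (R : Finset ℕ) : demoteSet T R = res ∅ R T := by
  cases T with
  | leaf => rfl
  | node b cs => simp [demoteSet, res, dSetList_eq_rList]

lemma contract_eq_contractSet (T : MTree) (i : ℕ) : contract T i = contractSet T {i} := by
  cases T with
  | leaf => rfl
  | node b cs =>
    have h := clist_eq_cSetList i 0 cs
    simp only [contract, contractSet]
    rw [h]
    norm_num

lemma demote_eq_demoteSet (T : MTree) (i : ℕ) : demote T i = demoteSet T {i} := by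
  cases T with
  | leaf => rfl
  | node b cs =>
    have h := dlist_eq_dSetList i 0 cs
    simp only [demote, demoteSet]
    rw [h]
    norm_num

lemma numMetric_res (C D : Finset ℕ) (T : MTree) :
    numMetric (res C D T) = (Finset.range (numMetric T) \ (C ∪ D)).card := by
  cases T with
  | leaf => simp [res, numMetric, rkk]
  | node b cs =>
    have h := sm_rList C D 0 cs
    rw [rkk_zero, Nat.zero_add] at h
    simp only [res, numMetric]
    have : subMetricList (rList C D 0 cs) = rkk (C ∪ D) (subMetricList cs) := by omega
    rw [this]
    rfl

lemma res_empty (T : MTree) : res ∅ ∅ T = T := by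
  cases T with
  | leaf => rfl
  | node b cs =>
    have h := cSetList_eq_rList ∅ 0 cs
    have h2 := cSetList_id ∅ 0 cs (by simp)
    simp only [res]
    rw [← h, h2]

lemma contractSet_res (C D L'' : Finset ℕ) (hL : ∀ x ∈ L'', x ∉ C ∪ D) (T : MTree) :
    contractSet (res C D T) (L''.image (rkk (C ∪ D))) = res (C ∪ L'') D T := by
  cases T with
  | leaf => rfl
  | node b cs =>
    have h := cset_rList C D L'' hL 0 cs
    rw [rkk_zero] at h
    simp only [res, contractSet]
    rw [h]

lemma demoteSet_res (C D R'' : Finset ℕ) (hR : ∀ x ∈ R'', x ∉ C ∪ D) (T : MTree) :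
    demoteSet (res C D T) (R''.image (rkk (C ∪ D))) = res C (D ∪ R'') T := by
  cases T with
  | leaf => rfl
  | node b cs =>
    have h := dset_rList C D R'' hR 0 cs
    rw [rkk_zero] at h
    simp only [res, demoteSet]
    rw [h]

lemma contract_res (C D : Finset ℕ) {j : ℕ} (hj : j ∉ C ∪ D) (T : MTree) :
    contract (res C D T) (rkk (C ∪ D) j) = res (insert j C) D T := by
  rw [contract_eq_contractSet, ← Finset.image_singleton,
    contractSet_res C D {j} (by simpa using hj) T]
  congr 1
  rw [Finset.union_comm]
  rfl

lemma demote_res (C D : Finset ℕ) {j : ℕ} (hj : j ∉ C ∪ D) (T : MTree) :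
    demote (res C D T) (rkk (C ∪ D) j) = res C (insert j D) T := by
  rw [demote_eq_demoteSet, ← Finset.image_singleton,
    demoteSet_res C D {j} (by simpa using hj) T]
  congr 1
  rw [Finset.union_comm]
  rfl

lemma contract_eq_res (T : MTree) (i : ℕ) : contract T i = res {i} ∅ T := by
  rw [contract_eq_contractSet, contractSet_eq_res]

lemma demote_eq_res (T : MTree) (i : ℕ) : demote T i = res ∅ {i} T := by
  rw [demote_eq_demoteSet, demoteSet_eq_res]

end MTree

section RhoLemmas
open Finset

lemma filter_lt_card_add_rkk (M : Finset ℕ) (i : ℕ) :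
    (M.filter (· < i)).card + rkk M i = i := by
  have h : M.filter (· < i) = Finset.range i ∩ M := by
    ext x
    simp only [Finset.mem_filter, Finset.mem_inter, Finset.mem_range]
    tauto
  rw [h]
  have := Finset.card_inter_add_card_sdiff (Finset.range i) M
  rw [Finset.card_range] at this
  exact this

lemma image_sdiff_inj {s t : Finset ℕ} {f : ℕ → ℕ} (hts : t ⊆ s)
    (hinj : ∀ x ∈ s, ∀ y ∈ s, f x = f y → x = y) :
    (s \ t).image f = s.image f \ t.image f := by
  ext y
  simp only [Finset.mem_image, Finset.mem_sdiff]
  constructor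
  · rintro ⟨x, ⟨hxs, hxt⟩, rfl⟩
    refine ⟨⟨x, hxs, rfl⟩, ?_⟩
    rintro ⟨z, hz, hfz⟩
    exact hxt (hinj z (hts hz) x hxs hfz ▸ hz)
  · rintro ⟨⟨x, hxs, rfl⟩, hy⟩
    exact ⟨x, ⟨hxs, fun hxt => hy ⟨x, hxt, rfl⟩⟩, rfl⟩

lemma rho_del {k i : ℕ} {M : Finset ℕ} (hik : i < k) (hiM : i ∉ M) (hMk : M ⊆ Finset.range k) :
    rho (rkk {i} k) (M.image (rkk {i})) + (M.filter (· < i)).card = rho k M := by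
  have hMs : M ⊆ Finset.range k \ {i} := fun x hx => by
    simp only [Finset.mem_sdiff, Finset.mem_singleton]
    exact ⟨hMk hx, fun h => hiM (h ▸ hx)⟩
  have hinj : ∀ x ∈ Finset.range k \ {i}, ∀ y ∈ Finset.range k \ {i},
      rkk {i} x = rkk {i} y → x = y := fun x hx y hy h =>
    rkk_injOn (by simpa using (Finset.mem_sdiff.1 hx).2) (by simpa using (Finset.mem_sdiff.1 hy).2) h
  have h1 : Finset.range (rkk {i} k) \ M.image (rkk {i})
      = ((Finset.range k \ {i}) \ M).image (rkk {i}) := by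
    rw [image_sdiff_inj hMs hinj, image_rkk_range]
  have h2 : (Finset.range k \ {i}) \ M = (Finset.range k \ M).erase i := by
    ext x
    simp only [Finset.mem_sdiff, Finset.mem_erase, Finset.mem_singleton]
    tauto
  have h3 : ∀ b ∈ (Finset.range k \ M).erase i,
      ((M.image (rkk {i})).filter (· < rkk {i} b)).card = (M.filter (· < b)).card := by
    intro b hb
    have hbi : b ∉ ({i} : Finset ℕ) := by
      simp only [Finset.mem_singleton]
      exact (Finset.mem_erase.1 hb).1
    have heq : (M.image (rkk {i})).filter (· < rkk {i} b) = (M.filter (· < b)).image (rkk {i}) := by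
      ext y
      simp only [Finset.mem_filter, Finset.mem_image]
      constructor
      · rintro ⟨⟨x, hx, rfl⟩, hlt⟩
        refine ⟨x, ⟨hx, ?_⟩, rfl⟩
        have hxi : x ∉ ({i} : Finset ℕ) := by
          simp only [Finset.mem_singleton]; exact fun h => hiM (h ▸ hx)
        exact (rkk_lt_iff hxi hbi).1 hlt
      · rintro ⟨x, ⟨hx, hlt⟩, rfl⟩
        refine ⟨⟨x, hx, rfl⟩, ?_⟩
        have hxi : x ∉ ({i} : Finset ℕ) := by
          simp only [Finset.mem_singleton]; exact fun h => hiM (h ▸ hx)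
        exact (rkk_lt_iff hxi hbi).2 hlt
    rw [heq]
    apply Finset.card_image_of_injOn
    intro x hx y hy h
    have hxi : x ∉ ({i} : Finset ℕ) := by
      simp only [Finset.mem_singleton]
      exact fun h' => hiM (h' ▸ (Finset.mem_filter.1 hx).1)
    have hyi : y ∉ ({i} : Finset ℕ) := by
      simp only [Finset.mem_singleton]
      exact fun h' => hiM (h' ▸ (Finset.mem_filter.1 hy).1)
    exact rkk_injOn hxi hyi h
  have hmem : i ∈ Finset.range k \ M := by
    simp only [Finset.mem_sdiff, Finset.mem_range]
    exact ⟨hik, hiM⟩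
  have hBinj : ∀ x ∈ (Finset.range k \ M).erase i, ∀ y ∈ (Finset.range k \ M).erase i,
      rkk {i} x = rkk {i} y → x = y := by
    intro x hx y hy h
    exact rkk_injOn (by simp [(Finset.mem_erase.1 hx).1]) (by simp [(Finset.mem_erase.1 hy).1]) h
  have h4 : rho (rkk {i} k) (M.image (rkk {i}))
      = ∑ b ∈ (Finset.range k \ M).erase i, (M.filter (· < b)).card := by
    unfold rho
    rw [h1, h2, Finset.sum_image hBinj]
    exact Finset.sum_congr rfl h3
  rw [h4, add_comm]
  exact Finset.add_sum_erase _ (fun b => (M.filter (· < b)).card) hmem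

end RhoLemmas

section RhoLemmas2
open Finset

lemma rho_ins {k i : ℕ} {M : Finset ℕ} (hik : i < k) (hiM : i ∉ M)
    (hMk : M ⊆ Finset.range k) :
    rho k (insert i M) + i + 1 + M.card = rho k M + k := by
  have hmem : i ∈ Finset.range k \ M := by
    simp only [Finset.mem_sdiff, Finset.mem_range]
    exact ⟨hik, hiM⟩
  have h2 : Finset.range k \ insert i M = (Finset.range k \ M).erase i :=
    Finset.sdiff_insert _ _ _
  have h3 : ∀ b ∈ (Finset.range k \ M).erase i,
      ((insert i M).filter (· < b)).card
        = (M.filter (· < b)).card + (if i < b then 1 else 0) := by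
    intro b _
    rw [Finset.filter_insert]
    by_cases hib : i < b
    · rw [if_pos hib, if_pos hib,
        Finset.card_insert_of_notMem (fun hc => hiM (Finset.mem_filter.1 hc).1)]
    · rw [if_neg hib, if_neg hib, add_zero]
  have h4 : rho k (insert i M)
      = (∑ b ∈ (Finset.range k \ M).erase i, (M.filter (· < b)).card)
        + (((Finset.range k \ M).erase i).filter (fun b => i < b)).card := by
    unfold rho
    rw [h2, Finset.sum_congr rfl h3, Finset.sum_add_distrib, Finset.card_filter]
  have h5 : (((Finset.range k \ M).erase i).filter (fun b => i < b)).card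
      + (((Finset.range k \ M).erase i).filter (fun b => ¬ i < b)).card
      = ((Finset.range k \ M).erase i).card :=
    Finset.card_filter_add_card_filter_not _
  have h6 : ((Finset.range k \ M).erase i).filter (fun b => ¬ i < b)
      = Finset.range i \ M := by
    ext b
    simp only [Finset.mem_filter, Finset.mem_erase, Finset.mem_sdiff, Finset.mem_range, not_lt]
    constructor
    · rintro ⟨⟨hne, _, hbM⟩, hnb⟩
      exact ⟨by omega, hbM⟩
    · rintro ⟨hbi, hbM⟩
      exact ⟨⟨by omega, by omega, hbM⟩, by omega⟩
  have h7 : rho k M = (M.filter (· < i)).card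
      + ∑ b ∈ (Finset.range k \ M).erase i, (M.filter (· < b)).card := by
    unfold rho
    exact (Finset.add_sum_erase _ (fun b => (M.filter (· < b)).card) hmem).symm
  have h8 : ((Finset.range k \ M).erase i).card + 1 = (Finset.range k \ M).card :=
    Finset.card_erase_add_one hmem
  have h9 : (Finset.range k \ M).card + M.card = k := by
    have := Finset.card_sdiff_add_card_eq_card hMk
    rwa [Finset.card_range] at this
  have h10 := filter_lt_card_add_rkk M i
  have h11 : rkk M i = (Finset.range i \ M).card := rfl
  rw [h6] at h5
  omega

lemma rkk_sdiff_eq {k i : ℕ} (hik : i ≤ k) (L : Finset ℕ) :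
    rkk (Finset.range k \ L) i = (L.filter (· < i)).card := by
  unfold rkk
  congr 1
  ext x
  simp only [Finset.mem_sdiff, Finset.mem_range, Finset.mem_filter, not_and, not_not]
  constructor
  · rintro ⟨h1, h2⟩
    exact ⟨h2 (by omega), h1⟩
  · rintro ⟨h1, h2⟩
    exact ⟨h2, fun _ => h1⟩

lemma neg_one_pow_congr' {a b : ℕ} (h : a % 2 = b % 2) : ((-1 : ℤ)) ^ a = (-1 : ℤ) ^ b := by
  rw [← Nat.div_add_mod a 2, ← Nat.div_add_mod b 2, h, pow_add, pow_add, pow_mul, pow_mul]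
  norm_num

lemma insert_sdiff_insert' {k i : ℕ} {M : Finset ℕ} (hik : i < k) (hiM : i ∉ M) :
    insert i (Finset.range k \ insert i M) = Finset.range k \ M := by
  ext x
  simp only [Finset.mem_insert, Finset.mem_sdiff, Finset.mem_range]
  constructor
  · rintro (rfl | ⟨h1, h2⟩)
    · exact ⟨hik, hiM⟩
    · exact ⟨h1, fun hx => h2 (Or.inr hx)⟩
  · rintro ⟨h1, h2⟩
    by_cases hx : x = i
    · exact Or.inl hx
    · exact Or.inr ⟨h1, fun hc => by
        rcases hc with h | h
        · exact hx h
        · exact h2 h⟩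

lemma sdiff_singleton_sdiff {k i : ℕ} {M : Finset ℕ} :
    (Finset.range k \ {i}) \ M = Finset.range k \ insert i M := by
  ext x
  simp only [Finset.mem_sdiff, Finset.mem_singleton, Finset.mem_insert, Finset.mem_range]
  tauto

end RhoLemmas2

section Reindex
open Finset

variable {A : Type*} [AddCommMonoid A]

lemma sum_range_card_sdiff (k : ℕ) (E : Finset ℕ) (f : ℕ → A) :
    ∑ p ∈ Finset.range ((Finset.range k \ E).card), f p
      = ∑ j ∈ Finset.range k \ E, f (rkk E j) := by
  have h : (Finset.range k \ E).card = rkk E k := rfl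
  rw [h, ← image_rkk_range, Finset.sum_image]
  intro x hx y hy hxy
  exact rkk_injOn (by simpa using (Finset.mem_sdiff.1 hx).2)
    (by simpa using (Finset.mem_sdiff.1 hy).2) hxy

lemma sum_powerset_reindex (k : ℕ) (E : Finset ℕ) (g : Finset ℕ → A) :
    ∑ L ∈ (Finset.range (rkk E k)).powerset, g L
      = ∑ S ∈ (Finset.range k \ E).powerset, g (S.image (rkk E)) := by
  have key : ∀ L ∈ (Finset.range (rkk E k)).powerset,
      ((Finset.range k \ E).filter (fun x => rkk E x ∈ L)).image (rkk E) = L := by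
    intro L hL
    rw [Finset.mem_powerset] at hL
    ext y
    simp only [Finset.mem_image, Finset.mem_filter]
    constructor
    · rintro ⟨x, ⟨_, hx2⟩, rfl⟩
      exact hx2
    · intro hy
      have hy' := hL hy
      rw [← image_rkk_range] at hy'
      rcases Finset.mem_image.1 hy' with ⟨x, hx, rfl⟩
      exact ⟨x, ⟨hx, hy⟩, rfl⟩
  refine Finset.sum_nbij' (i := fun L => (Finset.range k \ E).filter (fun x => rkk E x ∈ L))
    (j := fun S => S.image (rkk E)) ?_ ?_ ?_ ?_ ?_
  · intro L _
    exact Finset.mem_powerset.2 (Finset.filter_subset _ _)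
  · intro S hS
    rw [Finset.mem_powerset] at hS ⊢
    intro y hy
    rcases Finset.mem_image.1 hy with ⟨x, hx, rfl⟩
    rw [← image_rkk_range]
    exact Finset.mem_image_of_mem _ (hS hx)
  · intro L hL
    exact key L hL
  · intro S hS
    rw [Finset.mem_powerset] at hS
    ext x
    simp only [Finset.mem_filter, Finset.mem_image]
    constructor
    · rintro ⟨hx1, z, hz, hzx⟩
      have hxE : x ∉ E := by simpa using (Finset.mem_sdiff.1 hx1).2
      have hzE : z ∉ E := by simpa using (Finset.mem_sdiff.1 (hS hz)).2
      rwa [← rkk_injOn hzE hxE hzx]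
    · intro hx
      exact ⟨hS hx, x, hx, rfl⟩
  · intro L hL
    conv_lhs => rw [← key L hL]

lemma sum_powerset_mem (S : Finset ℕ) (f : Finset ℕ → ℕ → A) :
    ∑ L ∈ S.powerset, ∑ i ∈ L, f L i
      = ∑ i ∈ S, ∑ M ∈ (S \ {i}).powerset, f (insert i M) i := by
  rw [Finset.sum_sigma', Finset.sum_sigma']
  refine Finset.sum_nbij' (i := fun p => ⟨p.2, p.1.erase p.2⟩)
    (j := fun p => ⟨insert p.1 p.2, p.1⟩) ?_ ?_ ?_ ?_ ?_
  · rintro ⟨L, x⟩ hp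
    simp only [Finset.mem_sigma, Finset.mem_powerset] at hp ⊢
    refine ⟨hp.1 hp.2, ?_⟩
    intro y hy
    rw [Finset.mem_erase] at hy
    simp only [Finset.mem_sdiff, Finset.mem_singleton]
    exact ⟨hp.1 hy.2, hy.1⟩
  · rintro ⟨x, M⟩ hp
    simp only [Finset.mem_sigma, Finset.mem_powerset] at hp ⊢
    constructor
    · intro y hy
      rcases Finset.mem_insert.1 hy with rfl | hy
      · exact hp.1
      · exact (Finset.mem_sdiff.1 (hp.2 hy)).1
    · exact Finset.mem_insert_self _ _
  · rintro ⟨L, x⟩ hp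
    simp only [Finset.mem_sigma, Finset.mem_powerset] at hp
    simp [Finset.insert_erase hp.2]
  · rintro ⟨x, M⟩ hp
    simp only [Finset.mem_sigma, Finset.mem_powerset] at hp
    have hxM : x ∉ M := fun hc => by
      have := hp.2 hc
      simp at this
    simp [Finset.erase_insert hxM]
  · rintro ⟨L, x⟩ hp
    simp only [Finset.mem_sigma, Finset.mem_powerset] at hp
    simp only []
    rw [Finset.insert_erase hp.2]

lemma sum_powerset_not_mem (S : Finset ℕ) (f : Finset ℕ → ℕ → A) :
    ∑ L ∈ S.powerset, ∑ j ∈ S \ L, f L j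
      = ∑ j ∈ S, ∑ M ∈ (S \ {j}).powerset, f M j := by
  rw [Finset.sum_sigma', Finset.sum_sigma']
  refine Finset.sum_nbij' (i := fun p => ⟨p.2, p.1⟩)
    (j := fun p => ⟨p.2, p.1⟩) ?_ ?_ ?_ ?_ ?_
  · rintro ⟨L, x⟩ hp
    simp only [Finset.mem_sigma, Finset.mem_powerset, Finset.mem_sdiff] at hp ⊢
    refine ⟨hp.2.1, ?_⟩
    intro y hy
    simp only [Finset.mem_sdiff, Finset.mem_singleton]
    refine ⟨hp.1 hy, ?_⟩
    intro hc
    exact hp.2.2 (hc ▸ hy)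
  · rintro ⟨x, M⟩ hp
    simp only [Finset.mem_sigma, Finset.mem_powerset, Finset.mem_sdiff] at hp ⊢
    constructor
    · intro y hy
      exact (Finset.mem_sdiff.1 (hp.2 hy)).1
    · refine ⟨hp.1, fun hc => ?_⟩
      have := hp.2 hc
      simp at this
  · rintro ⟨L, x⟩ _
    rfl
  · rintro ⟨x, M⟩ _
    rfl
  · rintro ⟨L, x⟩ _
    rfl

end Reindex

section LinearLayer
open MTree Finset

lemma bndW_single (T : MTree) : bndW (Finsupp.single T 1) = bndWCell T := by
  rw [bndW, Finsupp.lsum_single, LinearMap.toSpanSingleton_apply, one_smul]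

lemma diagW_single (T : MTree) : diagW (Finsupp.single T 1) = diagWCell T := by
  rw [diagW, Finsupp.lsum_single, LinearMap.toSpanSingleton_apply, one_smul]

lemma koszulW_single (T : MTree) :
    koszulW (Finsupp.single T 1) = ((-1 : ℤ) ^ MTree.numMetric T) • Finsupp.single T 1 := by
  rw [koszulW, Finsupp.lsum_single, LinearMap.toSpanSingleton_apply, one_smul]

lemma bndWTensor_tmul (A B : MTree) :
    bndWTensor (Finsupp.single A (1 : ℤ) ⊗ₜ[ℤ] Finsupp.single B (1 : ℤ))
      = bndWCell A ⊗ₜ[ℤ] Finsupp.single B (1 : ℤ)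
        + ((-1 : ℤ) ^ MTree.numMetric A) •
            (Finsupp.single A (1 : ℤ) ⊗ₜ[ℤ] bndWCell B) := by
  rw [bndWTensor]
  erw [LinearMap.add_apply]
  rw [TensorProduct.map_tmul, TensorProduct.map_tmul,
    bndW_single, koszulW_single, bndW_single, LinearMap.id_apply,
    TensorProduct.smul_tmul']

lemma bndWCell_res (T : MTree) (C D : Finset ℕ) :
    bndWCell (MTree.res C D T)
      = ∑ j ∈ Finset.range (MTree.numMetric T) \ (C ∪ D),
          (-1 : ℤ) ^ (rkk (C ∪ D) j + 1) •
            (Finsupp.single (MTree.res (insert j C) D T) (1 : ℤ)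
              - Finsupp.single (MTree.res C (insert j D) T) (1 : ℤ)) := by
  rw [bndWCell, numMetric_res, sum_range_card_sdiff]
  refine Finset.sum_congr rfl fun j hj => ?_
  have hj' : j ∉ C ∪ D := (Finset.mem_sdiff.1 hj).2
  rw [contract_res C D hj', demote_res C D hj']

lemma diagWCell_res_c (T : MTree) (i : ℕ) :
    diagWCell (MTree.res {i} ∅ T)
      = ∑ M ∈ (Finset.range (MTree.numMetric T) \ {i}).powerset,
          (-1 : ℤ) ^ (rho (rkk {i} (MTree.numMetric T)) (M.image (rkk {i}))) •
            (Finsupp.single (MTree.res (insert i M) ∅ T) (1 : ℤ) ⊗ₜ[ℤ]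
              Finsupp.single
                (MTree.res {i} (Finset.range (MTree.numMetric T) \ insert i M) T) (1 : ℤ)) := by
  have hU : ({i} : Finset ℕ) ∪ ∅ = {i} := Finset.union_empty _
  have hnm : MTree.numMetric (MTree.res {i} ∅ T)
      = (Finset.range (MTree.numMetric T) \ {i}).card := by
    rw [numMetric_res, hU]
  rw [diagWCell, hnm]
  have hcard : (Finset.range (MTree.numMetric T) \ {i}).card = rkk {i} (MTree.numMetric T) := rfl
  rw [hcard, sum_powerset_reindex]
  refine Finset.sum_congr rfl fun M hM => ?_
  rw [Finset.mem_powerset] at hM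
  have hMi : ∀ x ∈ M, x ∉ ({i} : Finset ℕ) ∪ ∅ := fun x hx => by
    rw [hU]
    simpa using (Finset.mem_sdiff.1 (hM hx)).2
  have h1 : MTree.contractSet (MTree.res {i} ∅ T) (M.image (rkk {i}))
      = MTree.res (insert i M) ∅ T := by
    have := contractSet_res {i} ∅ M hMi T
    rw [hU] at this
    rw [this, Finset.insert_eq]
  have hinj : ∀ x ∈ Finset.range (MTree.numMetric T) \ {i},
      ∀ y ∈ Finset.range (MTree.numMetric T) \ {i}, rkk {i} x = rkk {i} y → x = y :=
    fun x hx y hy h => rkk_injOn (by simpa using (Finset.mem_sdiff.1 hx).2)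
      (by simpa using (Finset.mem_sdiff.1 hy).2) h
  have h2 : Finset.range (rkk {i} (MTree.numMetric T)) \ M.image (rkk {i})
      = ((Finset.range (MTree.numMetric T) \ {i}) \ M).image (rkk {i}) := by
    rw [image_sdiff_inj hM hinj, image_rkk_range]
  have h3 : MTree.demoteSet (MTree.res {i} ∅ T)
        (((Finset.range (MTree.numMetric T) \ {i}) \ M).image (rkk {i}))
      = MTree.res {i} (Finset.range (MTree.numMetric T) \ insert i M) T := by
    have hd : ∀ x ∈ (Finset.range (MTree.numMetric T) \ {i}) \ M,
        x ∉ ({i} : Finset ℕ) ∪ ∅ := fun x hx => by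
      rw [hU]
      simpa using ((Finset.mem_sdiff.1 (Finset.mem_sdiff.1 hx).1).2)
    have := demoteSet_res {i} ∅ _ hd T
    rw [hU] at this
    rw [this, Finset.empty_union, sdiff_singleton_sdiff]
  rw [h2, h1, h3]

lemma diagWCell_res_d (T : MTree) (i : ℕ) :
    diagWCell (MTree.res ∅ {i} T)
      = ∑ M ∈ (Finset.range (MTree.numMetric T) \ {i}).powerset,
          (-1 : ℤ) ^ (rho (rkk {i} (MTree.numMetric T)) (M.image (rkk {i}))) •
            (Finsupp.single (MTree.res M {i} T) (1 : ℤ) ⊗ₜ[ℤ]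
              Finsupp.single
                (MTree.res ∅
                  (insert i (Finset.range (MTree.numMetric T) \ insert i M)) T) (1 : ℤ)) := by
  have hU : (∅ : Finset ℕ) ∪ {i} = {i} := Finset.empty_union _
  have hnm : MTree.numMetric (MTree.res ∅ {i} T)
      = (Finset.range (MTree.numMetric T) \ {i}).card := by
    rw [numMetric_res, hU]
  rw [diagWCell, hnm]
  have hcard : (Finset.range (MTree.numMetric T) \ {i}).card = rkk {i} (MTree.numMetric T) := rfl
  rw [hcard, sum_powerset_reindex]
  refine Finset.sum_congr rfl fun M hM => ?_
  rw [Finset.mem_powerset] at hM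
  have hMi : ∀ x ∈ M, x ∉ (∅ : Finset ℕ) ∪ {i} := fun x hx => by
    rw [hU]
    simpa using (Finset.mem_sdiff.1 (hM hx)).2
  have h1 : MTree.contractSet (MTree.res ∅ {i} T) (M.image (rkk {i}))
      = MTree.res M {i} T := by
    have := contractSet_res ∅ {i} M hMi T
    rw [hU] at this
    rw [this, Finset.empty_union]
  have hinj : ∀ x ∈ Finset.range (MTree.numMetric T) \ {i},
      ∀ y ∈ Finset.range (MTree.numMetric T) \ {i}, rkk {i} x = rkk {i} y → x = y :=
    fun x hx y hy h => rkk_injOn (by simpa using (Finset.mem_sdiff.1 hx).2)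
      (by simpa using (Finset.mem_sdiff.1 hy).2) h
  have h2 : Finset.range (rkk {i} (MTree.numMetric T)) \ M.image (rkk {i})
      = ((Finset.range (MTree.numMetric T) \ {i}) \ M).image (rkk {i}) := by
    rw [image_sdiff_inj hM hinj, image_rkk_range]
  have h3 : MTree.demoteSet (MTree.res ∅ {i} T)
        (((Finset.range (MTree.numMetric T) \ {i}) \ M).image (rkk {i}))
      = MTree.res ∅
          (insert i (Finset.range (MTree.numMetric T) \ insert i M)) T := by
    have hd : ∀ x ∈ (Finset.range (MTree.numMetric T) \ {i}) \ M,
        x ∉ (∅ : Finset ℕ) ∪ {i} := fun x hx => by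
      rw [hU]
      simpa using ((Finset.mem_sdiff.1 (Finset.mem_sdiff.1 hx).1).2)
    have := demoteSet_res ∅ {i} _ hd T
    rw [hU] at this
    rw [this, sdiff_singleton_sdiff, ← Finset.insert_eq]
  rw [h2, h1, h3]

end LinearLayer

section MainAssembly
open MTree Finset

lemma rhs_eq (T : MTree) :
    diagW (bndWCell T)
      = ∑ i ∈ Finset.range (MTree.numMetric T),
          ∑ M ∈ (Finset.range (MTree.numMetric T) \ {i}).powerset,
            ((-1 : ℤ) ^ (i + 1 + rho (rkk {i} (MTree.numMetric T)) (M.image (rkk {i}))) •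
                (Finsupp.single (MTree.res (insert i M) ∅ T) (1 : ℤ) ⊗ₜ[ℤ]
                  Finsupp.single
                    (MTree.res {i} (Finset.range (MTree.numMetric T) \ insert i M) T) (1 : ℤ))
              - (-1 : ℤ) ^ (i + 1 + rho (rkk {i} (MTree.numMetric T)) (M.image (rkk {i}))) •
                (Finsupp.single (MTree.res M {i} T) (1 : ℤ) ⊗ₜ[ℤ]
                  Finsupp.single
                    (MTree.res ∅
                      (insert i (Finset.range (MTree.numMetric T) \ insert i M)) T) (1 : ℤ))) := by
  rw [bndWCell, map_sum]
  refine Finset.sum_congr rfl fun i _ => ?_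
  rw [map_smul, map_sub, contract_eq_res, demote_eq_res, diagW_single, diagW_single,
    diagWCell_res_c, diagWCell_res_d, ← Finset.sum_sub_distrib, Finset.smul_sum]
  refine Finset.sum_congr rfl fun M _ => ?_
  rw [smul_sub, smul_smul, ← pow_add, smul_smul, ← pow_add]

end MainAssembly

section MainAssembly2
open MTree Finset

lemma insert_empty_eq (j : ℕ) : insert j (∅ : Finset ℕ) = {j} := rfl

lemma lhs_eq (T : MTree) :
    bndWTensor (diagWCell T)
      = ∑ i ∈ Finset.range (MTree.numMetric T),
          ∑ M ∈ (Finset.range (MTree.numMetric T) \ {i}).powerset,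
            ((-1 : ℤ) ^ (rho (MTree.numMetric T) M + (rkk M i + 1)) •
                ((Finsupp.single (MTree.res (insert i M) ∅ T) (1 : ℤ) ⊗ₜ[ℤ]
                    Finsupp.single
                      (MTree.res ∅ (Finset.range (MTree.numMetric T) \ M) T) (1 : ℤ))
                  - (Finsupp.single (MTree.res M {i} T) (1 : ℤ) ⊗ₜ[ℤ]
                      Finsupp.single
                        (MTree.res ∅ (Finset.range (MTree.numMetric T) \ M) T) (1 : ℤ)))
              + (-1 : ℤ) ^ (rho (MTree.numMetric T) (insert i M)
                    + (Finset.range (MTree.numMetric T) \ insert i M).card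
                    + (rkk (Finset.range (MTree.numMetric T) \ insert i M) i + 1)) •
                ((Finsupp.single (MTree.res (insert i M) ∅ T) (1 : ℤ) ⊗ₜ[ℤ]
                    Finsupp.single
                      (MTree.res {i}
                        (Finset.range (MTree.numMetric T) \ insert i M) T) (1 : ℤ))
                  - (Finsupp.single (MTree.res (insert i M) ∅ T) (1 : ℤ) ⊗ₜ[ℤ]
                      Finsupp.single
                        (MTree.res ∅
                          (insert i (Finset.range (MTree.numMetric T) \ insert i M)) T)
                        (1 : ℤ)))) := by
  have hnm : ∀ L : Finset ℕ, MTree.numMetric (MTree.res L ∅ T)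
      = (Finset.range (MTree.numMetric T) \ L).card := by
    intro L
    rw [numMetric_res, Finset.union_empty]
  have hA : ∀ L : Finset ℕ, bndWCell (MTree.res L ∅ T)
      = ∑ j ∈ Finset.range (MTree.numMetric T) \ L,
          (-1 : ℤ) ^ (rkk L j + 1) •
            (Finsupp.single (MTree.res (insert j L) ∅ T) (1 : ℤ)
              - Finsupp.single (MTree.res L {j} T) (1 : ℤ)) := by
    intro L
    rw [bndWCell_res]
    simp only [Finset.union_empty, insert_empty_eq]
  have hB : ∀ L : Finset ℕ, L ⊆ Finset.range (MTree.numMetric T) →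
      bndWCell (MTree.res ∅ (Finset.range (MTree.numMetric T) \ L) T)
      = ∑ i ∈ L,
          (-1 : ℤ) ^ (rkk (Finset.range (MTree.numMetric T) \ L) i + 1) •
            (Finsupp.single
                (MTree.res {i} (Finset.range (MTree.numMetric T) \ L) T) (1 : ℤ)
              - Finsupp.single
                  (MTree.res ∅
                    (insert i (Finset.range (MTree.numMetric T) \ L)) T) (1 : ℤ)) := by
    intro L hL
    rw [bndWCell_res]
    simp only [Finset.empty_union, insert_empty_eq]
    rw [Finset.sdiff_sdiff_eq_self hL]
  calc bndWTensor (diagWCell T)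
      = ∑ L ∈ (Finset.range (MTree.numMetric T)).powerset,
          (-1 : ℤ) ^ (rho (MTree.numMetric T) L) •
            bndWTensor (Finsupp.single (MTree.res L ∅ T) (1 : ℤ) ⊗ₜ[ℤ]
              Finsupp.single
                (MTree.res ∅ (Finset.range (MTree.numMetric T) \ L) T) (1 : ℤ)) := by
        rw [diagWCell, map_sum]
        refine Finset.sum_congr rfl fun L _ => ?_
        rw [map_smul, contractSet_eq_res, demoteSet_eq_res]
    _ = ∑ L ∈ (Finset.range (MTree.numMetric T)).powerset,
          ((-1 : ℤ) ^ (rho (MTree.numMetric T) L) •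
              (bndWCell (MTree.res L ∅ T) ⊗ₜ[ℤ]
                Finsupp.single
                  (MTree.res ∅ (Finset.range (MTree.numMetric T) \ L) T) (1 : ℤ))
            + (-1 : ℤ) ^ (rho (MTree.numMetric T) L
                  + (Finset.range (MTree.numMetric T) \ L).card) •
              (Finsupp.single (MTree.res L ∅ T) (1 : ℤ) ⊗ₜ[ℤ]
                bndWCell (MTree.res ∅ (Finset.range (MTree.numMetric T) \ L) T))) := by
        refine Finset.sum_congr rfl fun L _ => ?_
        rw [bndWTensor_tmul, hnm L, smul_add, smul_smul, ← pow_add]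
    _ = ∑ L ∈ (Finset.range (MTree.numMetric T)).powerset,
          ((∑ j ∈ Finset.range (MTree.numMetric T) \ L,
              (-1 : ℤ) ^ (rho (MTree.numMetric T) L + (rkk L j + 1)) •
                ((Finsupp.single (MTree.res (insert j L) ∅ T) (1 : ℤ) ⊗ₜ[ℤ]
                    Finsupp.single
                      (MTree.res ∅ (Finset.range (MTree.numMetric T) \ L) T) (1 : ℤ))
                  - (Finsupp.single (MTree.res L {j} T) (1 : ℤ) ⊗ₜ[ℤ]
                      Finsupp.single
                        (MTree.res ∅ (Finset.range (MTree.numMetric T) \ L) T) (1 : ℤ))))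
            + ∑ i ∈ L,
              (-1 : ℤ) ^ (rho (MTree.numMetric T) L
                    + (Finset.range (MTree.numMetric T) \ L).card
                    + (rkk (Finset.range (MTree.numMetric T) \ L) i + 1)) •
                ((Finsupp.single (MTree.res L ∅ T) (1 : ℤ) ⊗ₜ[ℤ]
                    Finsupp.single
                      (MTree.res {i} (Finset.range (MTree.numMetric T) \ L) T) (1 : ℤ))
                  - (Finsupp.single (MTree.res L ∅ T) (1 : ℤ) ⊗ₜ[ℤ]
                      Finsupp.single
                        (MTree.res ∅
                          (insert i (Finset.range (MTree.numMetric T) \ L)) T) (1 : ℤ)))) := by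
        refine Finset.sum_congr rfl fun L hL => ?_
        rw [Finset.mem_powerset] at hL
        congr 1
        · rw [hA L, TensorProduct.sum_tmul, Finset.smul_sum]
          refine Finset.sum_congr rfl fun j _ => ?_
          rw [← TensorProduct.smul_tmul', TensorProduct.sub_tmul, smul_smul, ← pow_add]
        · rw [hB L hL, TensorProduct.tmul_sum, Finset.smul_sum]
          refine Finset.sum_congr rfl fun i _ => ?_
          rw [TensorProduct.tmul_smul, TensorProduct.tmul_sub, smul_smul, ← pow_add]
    _ = ∑ i ∈ Finset.range (MTree.numMetric T),
          ∑ M ∈ (Finset.range (MTree.numMetric T) \ {i}).powerset,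
            ((-1 : ℤ) ^ (rho (MTree.numMetric T) M + (rkk M i + 1)) •
                ((Finsupp.single (MTree.res (insert i M) ∅ T) (1 : ℤ) ⊗ₜ[ℤ]
                    Finsupp.single
                      (MTree.res ∅ (Finset.range (MTree.numMetric T) \ M) T) (1 : ℤ))
                  - (Finsupp.single (MTree.res M {i} T) (1 : ℤ) ⊗ₜ[ℤ]
                      Finsupp.single
                        (MTree.res ∅ (Finset.range (MTree.numMetric T) \ M) T) (1 : ℤ)))
              + (-1 : ℤ) ^ (rho (MTree.numMetric T) (insert i M)
                    + (Finset.range (MTree.numMetric T) \ insert i M).card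
                    + (rkk (Finset.range (MTree.numMetric T) \ insert i M) i + 1)) •
                ((Finsupp.single (MTree.res (insert i M) ∅ T) (1 : ℤ) ⊗ₜ[ℤ]
                    Finsupp.single
                      (MTree.res {i}
                        (Finset.range (MTree.numMetric T) \ insert i M) T) (1 : ℤ))
                  - (Finsupp.single (MTree.res (insert i M) ∅ T) (1 : ℤ) ⊗ₜ[ℤ]
                      Finsupp.single
                        (MTree.res ∅
                          (insert i (Finset.range (MTree.numMetric T) \ insert i M)) T)
                        (1 : ℤ)))) := by
        rw [Finset.sum_add_distrib, sum_powerset_not_mem, sum_powerset_mem,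
          ← Finset.sum_add_distrib]
        refine Finset.sum_congr rfl fun i _ => ?_
        rw [← Finset.sum_add_distrib]

end MainAssembly2

section Final
open MTree Finset

lemma bndWTensor_diagWCell (T : MTree) :
    bndWTensor (diagWCell T) = diagW (bndWCell T) := by
  rw [lhs_eq, rhs_eq]
  refine Finset.sum_congr rfl fun i hi => ?_
  refine Finset.sum_congr rfl fun M hM => ?_
  rw [Finset.mem_range] at hi
  rw [Finset.mem_powerset] at hM
  have hiM : i ∉ M := fun hc => by
    have := hM hc
    simp at this
  have hMk : M ⊆ Finset.range (MTree.numMetric T) :=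
    fun x hx => (Finset.mem_sdiff.1 (hM hx)).1
  set k := MTree.numMetric T with hk
  have hdel := rho_del hi hiM hMk
  have hins := rho_ins hi hiM hMk
  have hab := filter_lt_card_add_rkk M i
  have hcard : (Finset.range k \ insert i M).card + (M.card + 1) = k := by
    have h1 : insert i M ⊆ Finset.range k := by
      intro x hx
      rcases Finset.mem_insert.1 hx with rfl | hx
      · exact Finset.mem_range.2 hi
      · exact hMk hx
    have := Finset.card_sdiff_add_card_eq_card h1
    rw [Finset.card_insert_of_notMem hiM, Finset.card_range] at this
    omega
  have hrkk2 : rkk (Finset.range k \ insert i M) i = (M.filter (· < i)).card := by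
    rw [rkk_sdiff_eq (le_of_lt hi), Finset.filter_insert, if_neg (lt_irrefl i)]
  have he1 : rho k M + (rkk M i + 1) = i + 1 + rho (rkk {i} k) (M.image (rkk {i})) := by
    omega
  have he2 : (-1 : ℤ) ^ (rho k (insert i M) + (Finset.range k \ insert i M).card
        + (rkk (Finset.range k \ insert i M) i + 1))
      = (-1 : ℤ) ^ (i + 1 + rho (rkk {i} k) (M.image (rkk {i}))) := by
    apply neg_one_pow_congr'
    omega
  rw [he1, he2, insert_sdiff_insert' hi hiM]
  rw [smul_sub, smul_sub]
  abel

theorem diagW_chainMap' (x : WChains) :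
    bndWTensor (diagW x) = diagW (bndW x) := by
  induction x using Finsupp.induction_linear with
  | zero => simp
  | add f g hf hg => rw [map_add, map_add, map_add, map_add, hf, hg]
  | single a b =>
    have h : (Finsupp.single a b : WChains) = b • Finsupp.single a 1 := by
      rw [Finsupp.smul_single, smul_eq_mul, mul_one]
    rw [h, map_smul, map_smul, map_smul, map_smul, diagW_single, bndW_single,
      bndWTensor_diagWCell]

end Final

/-- The cubical diagonal `Δ_W` is a chain map:
`∂_{W⊗W} ∘ Δ_W = Δ_W ∘ ∂_W`. -/
theorem diagW_chainMap (x : WChains) :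
    bndWTensor (diagW x) = diagW (bndW x) := diagW_chainMap' x
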